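/- Let ε ∈ (0, 1/100], δ > 0, and set k = (√2/δ)·√(log(1/(2πε²))). Then for every real x with |x| ≥ δ/2, |½(1 + erf(kx)) − Θ(x)| ≤ ε, where Θ(x) = 1 if x > 0 and Θ(x) = 0 if x < 0. -/

import Mathlib

open MeasureTheory Set

/-- The real error function `erf(x) = (2/√π) ∫₀ˣ e^{-t²} dt`. -/
noncomputable def erf (x : ℝ) : ℝ :=
  2 / Real.sqrt Real.pi * ∫ t in (0:ℝ)..x, Real.exp (-t ^ 2)

lemma gauss_integrable : MeasureTheory.Integrable fun t : ℝ => Real.exp (-t ^ 2) := by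
  simpa using integrable_exp_neg_mul_sq one_pos

lemma t_gauss_integrable : MeasureTheory.Integrable fun t : ℝ => t * Real.exp (-t ^ 2) := by
  simpa using integrable_mul_exp_neg_mul_sq one_pos

lemma integral_t_exp (y : ℝ) :
    ∫ t in Set.Ioi y, t * Real.exp (-t ^ 2) = Real.exp (-y ^ 2) / 2 := by
  have h := integral_Ioi_of_hasDerivAt_of_tendsto' (a := y)
    (f := fun t => -Real.exp (-t ^ 2) / 2) (f' := fun t => t * Real.exp (-t ^ 2))
    (m := 0) ?_ ?_ ?_
  · rw [h]; ring
  · intro t _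
    have h1 : HasDerivAt (fun t : ℝ => -t ^ 2) (-(2 * t)) t := by
      simpa using (hasDerivAt_pow 2 t).fun_neg
    have h2 := (Real.hasDerivAt_exp (-t ^ 2)).comp t h1
    have h3 := h2.neg.div_const 2
    convert h3 using 1
    · rfl
    · rfl
    · ring
  · exact t_gauss_integrable.integrableOn
  · have h1 : Filter.Tendsto (fun t : ℝ => -t ^ 2) Filter.atTop Filter.atBot :=
      Filter.tendsto_neg_atTop_atBot.comp (Filter.tendsto_pow_atTop two_ne_zero)
    have h2 := Real.tendsto_exp_atBot.comp h1
    have := h2.neg.div_const 2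
    simpa using this

lemma tail_le (y : ℝ) (hy : 0 < y) :
    ∫ t in Set.Ioi y, Real.exp (-t ^ 2) ≤ Real.exp (-y ^ 2) / (2 * y) := by
  have h1 : ∫ t in Set.Ioi y, Real.exp (-t ^ 2)
      ≤ ∫ t in Set.Ioi y, t * Real.exp (-t ^ 2) / y := by
    refine setIntegral_mono_on gauss_integrable.integrableOn
      (t_gauss_integrable.div_const y).integrableOn measurableSet_Ioi ?_
    intro t ht
    rw [Set.mem_Ioi] at ht
    have h2 : 1 ≤ t / y := (one_le_div hy).2 ht.le
    have h3 := Real.exp_pos (-t ^ 2)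
    calc Real.exp (-t ^ 2) = Real.exp (-t ^ 2) * 1 := by ring
      _ ≤ Real.exp (-t ^ 2) * (t / y) := mul_le_mul_of_nonneg_left h2 h3.le
      _ = t * Real.exp (-t ^ 2) / y := by ring
  rw [integral_div, integral_t_exp] at h1
  calc _ ≤ _ := h1
    _ = Real.exp (-y ^ 2) / (2 * y) := by field_simp

lemma erf_tail (y : ℝ) (hy : 0 ≤ y) :
    (1 - erf y) / 2 = (∫ t in Set.Ioi y, Real.exp (-t ^ 2)) / Real.sqrt Real.pi := by
  have hsplit : (∫ t in Set.Ioi (0:ℝ), Real.exp (-t ^ 2))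
      = (∫ t in Set.Ioc (0:ℝ) y, Real.exp (-t ^ 2))
        + ∫ t in Set.Ioi y, Real.exp (-t ^ 2) := by
    rw [← setIntegral_union (Set.Ioc_disjoint_Ioi le_rfl) measurableSet_Ioi
      gauss_integrable.integrableOn gauss_integrable.integrableOn,
      Set.Ioc_union_Ioi_eq_Ioi hy]
  have hgauss : (∫ t in Set.Ioi (0:ℝ), Real.exp (-t ^ 2)) = Real.sqrt Real.pi / 2 := by
    have := integral_gaussian_Ioi 1
    simpa using this
  have hIoc : (∫ t in (0:ℝ)..y, Real.exp (-t ^ 2))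
      = ∫ t in Set.Ioc (0:ℝ) y, Real.exp (-t ^ 2) :=
    intervalIntegral.integral_of_le hy
  have hS : 0 < Real.sqrt Real.pi := Real.sqrt_pos.2 Real.pi_pos
  rw [erf, hIoc]
  have h1 : (∫ t in Set.Ioc (0:ℝ) y, Real.exp (-t ^ 2))
      = Real.sqrt Real.pi / 2 - ∫ t in Set.Ioi y, Real.exp (-t ^ 2) := by
    rw [← hgauss, hsplit]; ring
  rw [h1]
  field_simp
  ring

lemma erf_tail_nonneg (y : ℝ) (hy : 0 ≤ y) : 0 ≤ (1 - erf y) / 2 := by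
  rw [erf_tail y hy]
  positivity

lemma erf_neg (y : ℝ) : erf (-y) = -erf y := by
  unfold erf
  have h : (∫ t in (0:ℝ)..y, Real.exp (-t ^ 2)) = ∫ t in (-y)..(0:ℝ), Real.exp (-t ^ 2) := by
    have := intervalIntegral.integral_comp_neg (a := (0:ℝ)) (b := y)
      (f := fun t => Real.exp (-t ^ 2))
    simpa [neg_sq] using this
  rw [intervalIntegral.integral_symm, ← h]
  ring

/-- With `k = (√2/δ)·√(log(1/(2πε²)))`, the regulated step `Θ_k(x) = ½(1 + erf(kx))`
is within `ε` of the unit step `Θ` whenever `|x| ≥ δ/2`. -/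
theorem regulated_step_accuracy (ε δ : ℝ) (hε : ε ∈ Set.Ioc (0 : ℝ) (1 / 100))
    (hδ : 0 < δ) (x : ℝ) (hx : δ / 2 ≤ |x|) :
    |(1 + erf (Real.sqrt 2 / δ * Real.sqrt (Real.log (1 / (2 * Real.pi * ε ^ 2))) * x)) / 2 -
        (if 0 < x then (1 : ℝ) else 0)| ≤ ε := by
  obtain ⟨hε0, hε1⟩ := hε
  have hπ := Real.pi_pos
  have hπ315 : Real.pi < 3.15 := by
    have := Real.pi_lt_d2
    linarith
  have h2πε : 0 < 2 * Real.pi * ε ^ 2 := by positivity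
  set L := Real.log (1 / (2 * Real.pi * ε ^ 2)) with hLdef
  -- small : 2πε² ≤ exp (-1)
  have hεsmall : 2 * Real.pi * ε ^ 2 ≤ Real.exp (-1) := by
    have he1 : Real.exp 1 < 2.7182818286 := Real.exp_one_lt_d9
    rw [Real.exp_neg]
    have h1 : (2.7182818286 : ℝ)⁻¹ ≤ (Real.exp 1)⁻¹ :=
      inv_anti₀ (Real.exp_pos 1) he1.le
    nlinarith
  have hL1 : 1 ≤ L := by
    rw [hLdef, Real.le_log_iff_exp_le (by positivity), le_div_iff₀ h2πε]
    calc Real.exp 1 * (2 * Real.pi * ε ^ 2) ≤ Real.exp 1 * Real.exp (-1) :=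
          mul_le_mul_of_nonneg_left hεsmall (Real.exp_pos 1).le
      _ = 1 := by rw [← Real.exp_add]; norm_num
  have hL0 : 0 < L := lt_of_lt_of_le one_pos hL1
  have hexpL : Real.exp (-L) = 2 * Real.pi * ε ^ 2 := by
    rw [hLdef, one_div, Real.log_inv, neg_neg, Real.exp_log h2πε]
  have hhalf : Real.exp (-L / 2) = Real.sqrt 2 * Real.sqrt Real.pi * ε := by
    rw [Real.exp_half, hexpL, mul_assoc, Real.sqrt_mul (by norm_num : (0:ℝ) ≤ 2),
      Real.sqrt_mul hπ.le, Real.sqrt_sq hε0.le]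
    ring
  have hsL1 : 1 ≤ Real.sqrt L := by
    rw [show (1:ℝ) = Real.sqrt 1 by simp]
    exact Real.sqrt_le_sqrt hL1
  have hs2 : Real.sqrt 2 * Real.sqrt 2 = 2 := Real.mul_self_sqrt (by norm_num)
  have hs2pos : 0 < Real.sqrt 2 := Real.sqrt_pos.2 (by norm_num)
  have hSpos : 0 < Real.sqrt Real.pi := Real.sqrt_pos.2 hπ
  set K := Real.sqrt 2 / δ * Real.sqrt L with hKdef
  have hK0 : 0 < K := mul_pos (div_pos hs2pos hδ) (Real.sqrt_pos.2 hL0)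
  -- the key bound for y ≥ √L/√2
  have key : ∀ y : ℝ, Real.sqrt L / Real.sqrt 2 ≤ y → (1 - erf y) / 2 ≤ ε := by
    intro y hy
    have hy0pos : 0 < Real.sqrt L / Real.sqrt 2 :=
      div_pos (Real.sqrt_pos.2 hL0) hs2pos
    have hypos : 0 < y := lt_of_lt_of_le hy0pos hy
    rw [erf_tail y hypos.le]
    have h1 := tail_le y hypos
    have h2 : Real.exp (-y ^ 2) ≤ Real.exp (-L / 2) := by
      apply Real.exp_le_exp.2
      have hsq : L / 2 ≤ y ^ 2 := by
        have : (Real.sqrt L / Real.sqrt 2) ^ 2 ≤ y ^ 2 :=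
          pow_le_pow_left₀ hy0pos.le hy 2
        calc L / 2 = (Real.sqrt L / Real.sqrt 2) ^ 2 := by
              rw [div_pow, Real.sq_sqrt hL0.le, Real.sq_sqrt (by norm_num : (0:ℝ) ≤ 2)]
          _ ≤ y ^ 2 := this
      linarith
    -- 2y ≥ √2 since y ≥ √L/√2 ≥ 1/√2
    have hy12 : Real.sqrt 2 ≤ 2 * y := by
      have h3 : 1 / Real.sqrt 2 ≤ y := by
        calc 1 / Real.sqrt 2 ≤ Real.sqrt L / Real.sqrt 2 := by gcongr
          _ ≤ y := hy
      calc Real.sqrt 2 = 2 * (1 / Real.sqrt 2) := by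
            field_simp
            norm_num
          _ ≤ 2 * y := by linarith
    -- chain
    have h4 : Real.exp (-y ^ 2) ≤ Real.sqrt 2 * Real.sqrt Real.pi * ε := by
      rw [← hhalf]; exact h2
    have h5 : Real.sqrt 2 * Real.sqrt Real.pi * ε ≤ 2 * y * Real.sqrt Real.pi * ε := by
      have := mul_le_mul_of_nonneg_right hy12 hSpos.le
      nlinarith
    calc (∫ t in Set.Ioi y, Real.exp (-t ^ 2)) / Real.sqrt Real.pi
        ≤ (Real.exp (-y ^ 2) / (2 * y)) / Real.sqrt Real.pi := by gcongr
      _ ≤ ε := by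
          rw [div_div, div_le_iff₀ (by positivity)]
          calc Real.exp (-y ^ 2) ≤ Real.sqrt 2 * Real.sqrt Real.pi * ε := h4
            _ ≤ 2 * y * Real.sqrt Real.pi * ε := h5
            _ = ε * (2 * y * Real.sqrt Real.pi) := by ring
  -- K * (δ/2) = √L/√2
  have hKδ : Real.sqrt L / Real.sqrt 2 = K * (δ / 2) := by
    rw [hKdef]
    field_simp
    nlinarith [hs2]
  have hx0 : x ≠ 0 := by
    intro h
    rw [h, abs_zero] at hx
    linarith
  by_cases hxpos : 0 < x
  · rw [if_pos hxpos]
    have hxabs : δ / 2 ≤ x := by rwa [abs_of_pos hxpos] at hx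
    have hy : Real.sqrt L / Real.sqrt 2 ≤ K * x := by
      rw [hKδ]
      exact mul_le_mul_of_nonneg_left (by linarith) hK0.le
    have hKxpos : 0 < K * x := mul_pos hK0 hxpos
    have heq : (1 + erf (K * x)) / 2 - 1 = -((1 - erf (K * x)) / 2) := by ring
    rw [heq, abs_neg, abs_of_nonneg (erf_tail_nonneg _ hKxpos.le)]
    exact key _ hy
  · rw [if_neg hxpos]
    have hxneg : x < 0 := lt_of_le_of_ne (not_lt.1 hxpos) hx0
    have hxabs : δ / 2 ≤ -x := by rwa [abs_of_neg hxneg] at hx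
    have hy : Real.sqrt L / Real.sqrt 2 ≤ K * (-x) := by
      rw [hKδ]
      exact mul_le_mul_of_nonneg_left (by linarith) hK0.le
    have hKxpos : 0 < K * (-x) := mul_pos hK0 (by linarith)
    have herf : erf (K * x) = -erf (K * (-x)) := by
      rw [show K * x = -(K * (-x)) by ring, erf_neg]
    rw [herf]
    have heq : (1 + -erf (K * (-x))) / 2 - 0 = (1 - erf (K * (-x))) / 2 := by ring
    rw [heq, abs_of_nonneg (erf_tail_nonneg _ hKxpos.le)]
    exact key _ hy
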